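/- arXiv:1609.06809 — 8 statements merged into one kernel-verified Lean document; each statement's English description precedes it below -/
import Mathlib

section
/- Let G be a group, H a subgroup of G, and g an element of G. If H = (H ∩ g⁻¹Hg)(gHg⁻¹ ∩ H) and g is not in the normalizer of H in G, then g⁻¹ ∉ HgH. -/
open scoped Pointwise

theorem stmt_0 {G : Type*} [Group G] (H : Subgroup G) (g : G)
    (hfac : (H : Set G) =
      ((H : Set G) ∩ {x | ∃ h ∈ H, x = g⁻¹ * h * g}) *
      ({x | ∃ h ∈ H, x = g * h * g⁻¹} ∩ (H : Set G)))
    (hg : g ∉ Subgroup.normalizer (H : Set G)) :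
    g⁻¹ ∉ {x | ∃ h₁ ∈ H, ∃ h₂ ∈ H, x = h₁ * g * h₂} := by
  rintro ⟨h₁, hh₁, h₂, hh₂, hrel⟩
  -- factorization of any element of H
  have fac : ∀ h ∈ H, ∃ a ∈ H, ∃ b ∈ H,
      (g⁻¹ * a * g ∈ H) ∧ (g * b * g⁻¹ ∈ H) ∧ h = (g⁻¹ * a * g) * (g * b * g⁻¹) := by
    intro h hh
    have : (h : G) ∈ ((H : Set G) ∩ {x | ∃ h ∈ H, x = g⁻¹ * h * g}) *
        ({x | ∃ h ∈ H, x = g * h * g⁻¹} ∩ (H : Set G)) := by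
      rw [← hfac]; exact hh
    rcases this with ⟨x, ⟨hxH, a, haH, hxa⟩, y, ⟨⟨b, hbH, hyb⟩, hyH⟩, hxy⟩
    subst hxa hyb
    exact ⟨a, haH, b, hbH, hxH, hyH, hxy.symm⟩
  -- g² ∈ H
  have hg2 : g * g ∈ H := by
    rcases fac h₁ hh₁ with ⟨a, haH, b, hbH, _, _, hfact⟩
    have key : (1 : G) = a * (g * g) * (b * h₂) := by
      have : (1 : G) = g * g⁻¹ := by group
      rw [this, hrel, hfact]; group
    have : g * g = a⁻¹ * (b * h₂)⁻¹ := by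
      calc g * g = a⁻¹ * (a * (g * g) * (b * h₂)) * (b * h₂)⁻¹ := by group
        _ = a⁻¹ * 1 * (b*h₂)⁻¹ := by rw [← key]
        _ = a⁻¹ * (b * h₂)⁻¹ := by group
    rw [this]
    exact H.mul_mem (H.inv_mem haH) (H.inv_mem (H.mul_mem hbH hh₂))
  -- g normalizes H
  apply hg
  rw [Subgroup.mem_normalizer_iff]
  intro h
  constructor
  · intro hh
    rcases fac h hh with ⟨a, haH, b, hbH, _, _, hfact⟩
    have : g * h * g⁻¹ = a * ((g * g) * b * (g * g)⁻¹) := by rw [hfact]; group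
    rw [this]
    exact H.mul_mem haH (H.mul_mem (H.mul_mem hg2 hbH) (H.inv_mem hg2))
  · intro hk
    rcases fac (g * h * g⁻¹) hk with ⟨a, haH, b, hbH, _, _, hfact⟩
    have : h = (g * g)⁻¹ * a * (g * g) * b := by
      have h1 : h = g⁻¹ * (g * h * g⁻¹) * g := by group
      rw [h1, hfact]; group
    rw [this]
    exact H.mul_mem (H.mul_mem (H.mul_mem (H.inv_mem hg2) haH) hg2) hbH
end

section
/- Let p > 3 be a prime with p ≡ ±2 (mod 5) and p ≡ 1 (mod 3), and let a, b ∈ F_{p²} with a² + a − 1 = 0 and b² + b + 1 = 0. Set d = −2(a − b). Then d^(p+1) = −8 and consequently d^((p²−1)/3) = 1, i.e., d is a nonzero cube in F_{p²}. -/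
private lemma stmt_8_aux2 : ¬ IsSquare (2 : ZMod 5) := by decide
private lemma stmt_8_aux3 : ¬ IsSquare (3 : ZMod 5) := by decide

theorem stmt_8 (p : ℕ) [Fact p.Prime] (hp : 3 < p)
    (hp5 : p % 5 = 2 ∨ p % 5 = 3) (hp3 : p % 3 = 1)
    (a b : GaloisField p 2) (ha : a ^ 2 + a - 1 = 0) (hb : b ^ 2 + b + 1 = 0) :
    (-2 * (a - b)) ^ (p + 1) = -8 ∧ (-2 * (a - b)) ^ ((p ^ 2 - 1) / 3) = 1 := by
  have pp : p.Prime := Fact.out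
  have hp2 : p ≠ 2 := by omega
  have hodd : p % 2 = 1 := pp.eq_two_or_odd.resolve_left hp2
  -- 2 ≠ 0
  have h2ne : (2 : GaloisField p 2) ≠ 0 := by
    have h : ((2 : ℕ) : GaloisField p 2) ≠ 0 := by
      rw [Ne, CharP.cast_eq_zero_iff (GaloisField p 2) p]
      intro h; have := Nat.le_of_dvd (by norm_num) h; omega
    simpa using h
  -- 2^p = 2
  have h2p : (2 : GaloisField p 2) ^ p = 2 := by
    have := map_natCast (frobenius (GaloisField p 2) p) 2
    simpa [frobenius_def] using this
  have hn2p : (-2 : GaloisField p 2) ^ p = -2 := by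
    rw [(Nat.odd_iff.mpr hodd).neg_pow, h2p]
  -- b is a cube root of 1
  have hb3 : b ^ 3 = 1 := by linear_combination (b - 1) * hb
  have hbgen : ∀ n : ℕ, n % 3 = 1 → b ^ n = b := by
    intro n hn
    obtain ⟨k, rfl⟩ : ∃ k, n = 3 * k + 1 := ⟨n / 3, by omega⟩
    rw [pow_succ, pow_mul, hb3, one_pow, one_mul]
  have hbp : b ^ p = b := hbgen p hp3
  -- a^p is a root of X^2+X-1
  have hfa : (a ^ p) ^ 2 + a ^ p - 1 = 0 := by
    have h1 : (a ^ 2 + a - 1) ^ p = (a ^ p) ^ 2 + a ^ p - 1 := by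
      rw [show a ^ 2 + a - 1 = a ^ 2 + (a - 1) by ring, add_pow_char, sub_pow_char,
        one_pow, ← pow_mul, mul_comm 2 p, pow_mul]
      ring
    rw [ha, zero_pow pp.ne_zero] at h1
    exact h1.symm
  have hcase : (a ^ p - a) * (a ^ p + 1 + a) = 0 := by linear_combination hfa - ha
  have hap : a ^ p = -1 - a := by
    rcases mul_eq_zero.mp hcase with h | h
    · -- a^p = a leads to a contradiction via quadratic reciprocity
      exfalso
      have haa : a ^ p = a := sub_eq_zero.mp h
      have hc2 : (2 * a + 1) ^ 2 = 5 := by linear_combination 4 * ha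
      have hcp : (2 * a + 1) ^ p = 2 * a + 1 := by
        rw [add_pow_char, mul_pow, h2p, haa, one_pow]
      have h5ne : (5 : GaloisField p 2) ≠ 0 := by
        have h : ((5 : ℕ) : GaloisField p 2) ≠ 0 := by
          rw [Ne, CharP.cast_eq_zero_iff (GaloisField p 2) p]
          intro h5
          have := (Nat.prime_dvd_prime_iff_eq pp (by norm_num)).mp h5
          omega
        simpa using h
      have hc0 : (2 * a + 1 : GaloisField p 2) ≠ 0 := by
        intro h0; rw [h0] at hc2; simp at hc2; exact h5ne hc2.symm
      have hc1 : (2 * a + 1 : GaloisField p 2) ^ (p - 1) = 1 := by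
        have h1 : (2 * a + 1 : GaloisField p 2) ^ (p - 1) * (2 * a + 1) =
            (2 * a + 1) ^ p := by
          rw [← pow_succ]; congr 1; omega
        rw [hcp] at h1
        exact mul_right_cancel₀ hc0 (h1.trans (one_mul _).symm)
      have h5F : (5 : GaloisField p 2) ^ (p / 2) = 1 := by
        rw [← hc2, ← pow_mul, show 2 * (p / 2) = p - 1 by omega, hc1]
      have h5Z : (5 : ZMod p) ^ (p / 2) = 1 := by
        apply (algebraMap (ZMod p) (GaloisField p 2)).injective
        rw [map_pow, map_ofNat, map_one]
        exact h5F
      have h5Zne : (5 : ZMod p) ≠ 0 := by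
        have h : ((5 : ℕ) : ZMod p) ≠ 0 := by
          rw [Ne, ZMod.natCast_eq_zero_iff]
          intro h5
          have := (Nat.prime_dvd_prime_iff_eq pp (by norm_num)).mp h5
          omega
        simpa using h
      have hsq : IsSquare (5 : ZMod p) := (ZMod.euler_criterion p h5Zne).mpr h5Z
      haveI : Fact (Nat.Prime 5) := ⟨by norm_num⟩
      have hps : IsSquare ((p : ℕ) : ZMod 5) := by
        apply (ZMod.exists_sq_eq_prime_iff_of_mod_four_eq_one (p := 5) (q := p)
          (by norm_num) hp2).mpr
        simpa using hsq
      rw [show ((p : ℕ) : ZMod 5) = ((p % 5 : ℕ) : ZMod 5) from (ZMod.natCast_mod p 5).symm]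
        at hps
      rcases hp5 with h5' | h5' <;> rw [h5'] at hps <;> norm_num at hps
      · exact absurd hps stmt_8_aux2
      · exact absurd hps stmt_8_aux3
    · linear_combination h
  -- main computation
  have hdp : (-2 * (a - b)) ^ p = -2 * ((-1 - a) - b) := by
    rw [mul_pow, sub_pow_char, hap, hbp, hn2p]
  have key : (-2 * (a - b)) ^ (p + 1) = -8 := by
    rw [pow_succ, hdp]
    linear_combination (-4 : GaloisField p 2) * ha + 4 * hb
  refine ⟨key, ?_⟩
  have hsplit : (p ^ 2 - 1) / 3 = (p + 1) * ((p - 1) / 3) := by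
    have h1 : p ^ 2 - 1 = (p + 1) * (p - 1) := by
      have := Nat.sq_sub_sq p 1
      simpa using this
    rw [h1, Nat.mul_div_assoc _ (by omega : (3:ℕ) ∣ p - 1)]
  rw [hsplit, pow_mul, key,
    show (-8 : GaloisField p 2) = (-2) ^ 3 by norm_num, ← pow_mul,
    show 3 * ((p - 1) / 3) = p - 1 by omega]
  have hn2ne : (-2 : GaloisField p 2) ≠ 0 := neg_ne_zero.mpr h2ne
  have h1 : (-2 : GaloisField p 2) ^ (p - 1) * (-2) = (-2) ^ p := by
    rw [← pow_succ]; congr 1; omega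
  rw [hn2p] at h1
  exact mul_right_cancel₀ hn2ne (h1.trans (one_mul (-2 : GaloisField p 2)).symm)
end

section
/- Let p > 3 be a prime with p ≡ ±2 (mod 5) and p ≡ 2 (mod 3), and let a, b ∈ F_{p²} with a² + a − 1 = 0 and b² + b + 1 = 0. Set d = −2(a − b). Then d^(p−1) = −1 and consequently d^((p²−1)/3) = 1, i.e., d is a nonzero cube in F_{p²}. -/
theorem stmt_9 (p : ℕ) [Fact p.Prime] (hp : 3 < p)
    (hp5 : p % 5 = 2 ∨ p % 5 = 3) (hp3 : p % 3 = 2)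
    (a b : GaloisField p 2) (ha : a ^ 2 + a - 1 = 0) (hb : b ^ 2 + b + 1 = 0) :
    (-2 * (a - b)) ^ (p - 1) = -1 ∧ (-2 * (a - b)) ^ ((p ^ 2 - 1) / 3) = 1 := by
  have hprime : p.Prime := Fact.out
  haveI : Fact (Nat.Prime 5) := ⟨by norm_num⟩
  have hodd : p % 2 = 1 := Nat.odd_iff.mp (hprime.odd_of_ne_two (by omega))
  -- b^p = -1 - b
  have hb3 : b ^ 3 = 1 := by linear_combination (b - 1) * hb
  have hbp : b ^ p = -1 - b := by
    obtain ⟨t, ht⟩ : ∃ t, p = 3 * t + 2 := ⟨p / 3, by omega⟩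
    have hbt : b ^ p = (b ^ 3) ^ t * b ^ 2 := by
      rw [← pow_mul, ← pow_add]; congr 1
    rw [hbt, hb3, one_pow, one_mul]
    linear_combination hb
  -- Frobenius on a
  have hfa : (a ^ p) ^ 2 + a ^ p - 1 = 0 := by
    have h := congrArg (frobenius (GaloisField p 2) p) ha
    rw [map_zero, map_sub, map_add, map_pow, map_one, frobenius_def] at h
    exact h
  have hdich : a ^ p = a ∨ a ^ p = -1 - a := by
    have h : (a ^ p - a) * (a ^ p + a + 1) = 0 := by linear_combination hfa - ha
    rcases mul_eq_zero.mp h with h | h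
    · exact Or.inl (sub_eq_zero.mp h)
    · exact Or.inr (by linear_combination h)
  have h5K : (5 : GaloisField p 2) ≠ 0 := by
    have h5 : ¬ p ∣ 5 := by
      intro h
      have := Nat.le_of_dvd (by norm_num) h
      interval_cases p <;> omega
    intro h0
    exact h5 ((CharP.cast_eq_zero_iff (GaloisField p 2) p 5).mp (by exact_mod_cast h0))
  have hap : a ^ p = -1 - a := by
    rcases hdich with h | h
    · exfalso
      have hc : (2 * a + 1) ^ 2 = 5 := by linear_combination 4 * ha
      have hcp : (2 * a + 1) ^ p = 2 * a + 1 := by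
        have h2 : frobenius (GaloisField p 2) p (2 * a + 1) = 2 * a + 1 := by
          rw [map_add, map_mul, map_ofNat, map_one, frobenius_def, h]
        simpa [frobenius_def] using h2
      have hc0 : (2 * a + 1) ≠ 0 := by
        intro h0
        rw [h0] at hc
        simp at hc
        exact h5K hc.symm
      have hc1 : (2 * a + 1) ^ (p - 1) = 1 := by
        have h1 : (2 * a + 1) ^ (p - 1) * (2 * a + 1) = 1 * (2 * a + 1) := by
          rw [← pow_succ, Nat.sub_add_cancel (by omega), hcp, one_mul]
        exact mul_right_cancel₀ hc0 h1
      have h5pow : (5 : GaloisField p 2) ^ ((p - 1) / 2) = 1 := by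
        rw [← hc, ← pow_mul]
        have : 2 * ((p - 1) / 2) = p - 1 := by omega
        rw [this, hc1]
      -- transfer to ZMod p
      have hmap : (5 : ZMod p) ^ ((p - 1) / 2) = 1 := by
        apply (algebraMap (ZMod p) (GaloisField p 2)).injective
        rw [map_pow, map_ofNat, map_one, h5pow]
      have h5z : (5 : ZMod p) ≠ 0 := by
        have h5 : ¬ p ∣ 5 := by
          intro h
          have := Nat.le_of_dvd (by norm_num) h
          interval_cases p <;> omega
        intro h0
        exact h5 ((CharP.cast_eq_zero_iff (ZMod p) p 5).mp (by exact_mod_cast h0))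
      have hsq : IsSquare (5 : ZMod p) := by
        rw [ZMod.euler_criterion p h5z]
        have : p / 2 = (p - 1) / 2 := by omega
        rw [this]; exact hmap
      have hsq' : IsSquare ((p : ℕ) : ZMod 5) := by
        rw [ZMod.exists_sq_eq_prime_iff_of_mod_four_eq_one (by norm_num) (by omega)]
        exact_mod_cast hsq
      rw [← ZMod.natCast_mod p 5] at hsq'
      rcases hp5 with h5' | h5' <;> rw [h5'] at hsq' <;> revert hsq' <;> decide +revert
    · exact h
  -- d^p = -d
  have hdp : (-2 * (a - b)) ^ p = -(-2 * (a - b)) := by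
    have h1 : frobenius (GaloisField p 2) p (-2 * (a - b)) = -2 * (a ^ p - b ^ p) := by
      rw [map_mul, map_sub, map_neg, map_ofNat, frobenius_def, frobenius_def]
    rw [frobenius_def] at h1
    rw [h1, hap, hbp]; ring
  -- d ≠ 0
  have h2K : (2 : GaloisField p 2) ≠ 0 := by
    have h2 : ¬ p ∣ 2 := by
      intro h
      have := Nat.le_of_dvd (by norm_num) h
      omega
    intro h0
    exact h2 ((CharP.cast_eq_zero_iff (GaloisField p 2) p 2).mp (by exact_mod_cast h0))
  have hd0 : (-2 : GaloisField p 2) * (a - b) ≠ 0 := by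
    intro h0
    have h2 : (a - b) * (a + b + 1) = 2 := by linear_combination ha - hb
    have hab : (a - b) = 0 := by
      rcases mul_eq_zero.mp h0 with h | h
      · exfalso; apply h2K; linear_combination -h
      · exact h
    rw [hab, zero_mul] at h2
    exact h2K h2.symm
  have hd1 : (-2 * (a - b)) ^ (p - 1) = -1 := by
    have h1 : (-2 * (a - b)) ^ (p - 1) * (-2 * (a - b)) = -1 * (-2 * (a - b)) := by
      rw [← pow_succ, Nat.sub_add_cancel (by omega), hdp]; ring
    exact mul_right_cancel₀ hd0 h1
  refine ⟨hd1, ?_⟩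
  obtain ⟨m, hm⟩ : ∃ m, p = 6 * m + 5 := ⟨p / 6, by omega⟩
  have key : (p ^ 2 - 1) / 3 = (p - 1) * (2 * (m + 1)) := by
    have h1 : p ^ 2 = 36 * (m * m) + 60 * m + 25 := by rw [hm]; ring
    have h2 : (p - 1) * (2 * (m + 1)) = 12 * (m * m) + 20 * m + 8 := by
      have : p - 1 = 6 * m + 4 := by omega
      rw [this]; ring
    rw [h1, h2]
    generalize m * m = t
    omega
  rw [key, pow_mul, hd1]
  rw [pow_mul]
  norm_num
end

section
/- Let p > 3 be a prime and a ∈ F_{p²} with a² + a − 1 = 0. The characteristic polynomial of the 3×3 matrix X over F_{p²} with rows (a⁻¹, 1, −a), (−1, a, −a⁻¹), (−a, a⁻¹, 1) equals (λ − 2)(λ² − 2aλ + 4), and moreover (λ − 2)(λ² − 2aλ + 4)(λ² + 2aλ + 2λ + 4) = λ⁵ − 32. -/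
open Polynomial in
theorem stmt_11 (p : ℕ) [Fact p.Prime] (hp : 3 < p)
    (a : GaloisField p 2) (ha : a ^ 2 + a - 1 = 0) :
    (!![a⁻¹, 1, -a; -1, a, -a⁻¹; -a, a⁻¹, 1] :
        Matrix (Fin 3) (Fin 3) (GaloisField p 2)).charpoly
      = (X - C 2) * (X ^ 2 - C (2 * a) * X + C 4) ∧
    (X - C 2) * (X ^ 2 - C (2 * a) * X + C 4) * (X ^ 2 + C (2 * a) * X + 2 * X + C 4)
      = (X ^ 5 - C 32 : Polynomial (GaloisField p 2)) := by
  have hmul : a * (a + 1) = 1 := by ring_nf; linear_combination ha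
  have hinv : a⁻¹ = a + 1 := inv_eq_of_mul_eq_one_right hmul
  have hC : (C a ^ 2 + C a - 1 : Polynomial (GaloisField p 2)) = 0 := by
    have := congrArg C ha
    simpa using this
  constructor
  · rw [Matrix.charpoly, Matrix.det_fin_three]
    simp only [Matrix.charmatrix_apply, Matrix.cons_val', Matrix.cons_val_zero,
      Matrix.cons_val_one, Matrix.head_cons, Matrix.head_fin_const, Matrix.cons_val_fin_one,
      Matrix.empty_val', Matrix.cons_val_two, Matrix.tail_cons, Matrix.diagonal_apply,
      Matrix.scalar_apply, Matrix.smul_apply, Matrix.one_apply, hinv]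
    simp [Matrix.diagonal_apply, Fin.ext_iff]
    simp only [map_ofNat, map_mul, map_add, map_neg, map_one]
    linear_combination (X - 6) * hC
  · simp only [map_ofNat, map_mul, map_add, map_neg, map_one]
    linear_combination (8 * X ^ 2 - 4 * X ^ 3) * hC
end

section
/- Let p > 3 be a prime, p ≡ ±2 (mod 5), and a ∈ F_{p²} with a² + a − 1 = 0. Let X be the 3×3 matrix over F_{p²} with rows (a⁻¹, 1, −a), (−1, a, −a⁻¹), (−a, a⁻¹, 1). Then X⁵ = 32·I, the 3×3 identity matrix scaled by 32. -/
theorem stmt_12 (p : ℕ) [Fact p.Prime] (hp : 3 < p)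
    (hp5 : p % 5 = 2 ∨ p % 5 = 3)
    (a : GaloisField p 2) (ha : a ^ 2 + a - 1 = 0) :
    (!![a⁻¹, 1, -a; -1, a, -a⁻¹; -a, a⁻¹, 1] :
        Matrix (Fin 3) (Fin 3) (GaloisField p 2)) ^ 5
      = (32 : GaloisField p 2) • (1 : Matrix (Fin 3) (Fin 3) (GaloisField p 2)) := by
  have hinv : a⁻¹ = a + 1 := by
    have : a * (a + 1) = 1 := by linear_combination ha
    exact inv_eq_of_mul_eq_one_right this
  rw [hinv]
  set X : Matrix (Fin 3) (Fin 3) (GaloisField p 2) :=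
    !![a + 1, 1, -a; -1, a, -(a + 1); -a, a + 1, 1] with hX
  have h2 : X * X =
      !![2, 2*a, -2*a - 2; -2*a, -2*a - 2, -2; -2*a - 2, 2, -2*a] := by
    rw [hX]
    ext i j
    fin_cases i <;> fin_cases j <;>
      simp [Matrix.mul_apply, Fin.sum_univ_three] <;>
      first
        | linear_combination (0 : GaloisField p 2) * ha
        | linear_combination (16 : GaloisField p 2) * ha
        | first
        | linear_combination (0 : GaloisField p 2) * ha
        | linear_combination (16 : GaloisField p 2) * ha
        | linear_combination (8 : GaloisField p 2) * ha
        | linear_combination (4 : GaloisField p 2) * ha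
        | linear_combination (3 : GaloisField p 2) * ha
        | linear_combination (2 : GaloisField p 2) * ha
        | linear_combination (1 : GaloisField p 2) * ha
        | linear_combination (-1 : GaloisField p 2) * ha
        | linear_combination (-2 : GaloisField p 2) * ha
        | linear_combination (-3 : GaloisField p 2) * ha
        | linear_combination (-4 : GaloisField p 2) * ha
        | linear_combination (-8 : GaloisField p 2) * ha
        | linear_combination (-16 : GaloisField p 2) * ha
        | linear_combination (4 : GaloisField p 2) * ha
        | linear_combination (3 : GaloisField p 2) * ha
        | linear_combination (2 : GaloisField p 2) * ha
        | linear_combination (1 : GaloisField p 2) * ha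
        | linear_combination (-1 : GaloisField p 2) * ha
        | linear_combination (-2 : GaloisField p 2) * ha
        | linear_combination (-3 : GaloisField p 2) * ha
        | linear_combination (-4 : GaloisField p 2) * ha
        | linear_combination (-8 : GaloisField p 2) * ha
        | linear_combination (-16 : GaloisField p 2) * ha
  have h4 : (X * X) * (X * X) =
      !![8*a + 8, -8, -8*a; 8, 8*a, 8*a + 8; -8*a, -8*a - 8, 8] := by
    rw [h2]
    ext i j
    fin_cases i <;> fin_cases j <;>
      simp [Matrix.mul_apply, Fin.sum_univ_three] <;>
      first
        | linear_combination (0 : GaloisField p 2) * ha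
        | linear_combination (16 : GaloisField p 2) * ha
        | linear_combination (8 : GaloisField p 2) * ha
        | linear_combination (4 : GaloisField p 2) * ha
        | linear_combination (3 : GaloisField p 2) * ha
        | linear_combination (2 : GaloisField p 2) * ha
        | linear_combination (1 : GaloisField p 2) * ha
        | linear_combination (-1 : GaloisField p 2) * ha
        | linear_combination (-2 : GaloisField p 2) * ha
        | linear_combination (-3 : GaloisField p 2) * ha
        | linear_combination (-4 : GaloisField p 2) * ha
        | linear_combination (-8 : GaloisField p 2) * ha
        | linear_combination (-16 : GaloisField p 2) * ha
  have h5 : ((X * X) * (X * X)) * X =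
      (32 : GaloisField p 2) • (1 : Matrix (Fin 3) (Fin 3) (GaloisField p 2)) := by
    rw [h4, hX]
    ext i j
    fin_cases i <;> fin_cases j <;>
      simp [Matrix.mul_apply, Fin.sum_univ_three, Matrix.one_apply] <;>
      first
        | linear_combination (0 : GaloisField p 2) * ha
        | linear_combination (16 : GaloisField p 2) * ha
        | linear_combination (8 : GaloisField p 2) * ha
        | linear_combination (4 : GaloisField p 2) * ha
        | linear_combination (3 : GaloisField p 2) * ha
        | linear_combination (2 : GaloisField p 2) * ha
        | linear_combination (1 : GaloisField p 2) * ha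
        | linear_combination (-1 : GaloisField p 2) * ha
        | linear_combination (-2 : GaloisField p 2) * ha
        | linear_combination (-3 : GaloisField p 2) * ha
        | linear_combination (-4 : GaloisField p 2) * ha
        | linear_combination (-8 : GaloisField p 2) * ha
        | linear_combination (-16 : GaloisField p 2) * ha
  calc X ^ 5 = ((X * X) * (X * X)) * X := by noncomm_ring
    _ = _ := h5
end

section
/- Let p > 3 be a prime and a, b ∈ F_{p²} with a² + a − 1 = 0 and b² + b + 1 = 0. Let W be the 3×3 matrix over F_{p²} with rows (b+1, −a−b−1, −b), (−b, −ab−a−b, −1), (a−b, 0, ab+a+1). Then the characteristic polynomial of W equals (λ − 2)(λ² + 4), and W⁴ = 16·I. -/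
private lemma finmk2 {h} : (⟨2, h⟩ : Fin 3) = 2 := rfl

open Polynomial in
set_option maxHeartbeats 2000000 in
theorem stmt_14 (p : ℕ) [Fact p.Prime] (hp : 3 < p)
    (a b : GaloisField p 2) (ha : a ^ 2 + a - 1 = 0) (hb : b ^ 2 + b + 1 = 0) :
    (!![b + 1, -a - b - 1, -b; -b, -(a * b) - a - b, -1; a - b, 0, a * b + a + 1] :
        Matrix (Fin 3) (Fin 3) (GaloisField p 2)).charpoly
      = (X - C 2) * (X ^ 2 + C 4) ∧
    (!![b + 1, -a - b - 1, -b; -b, -(a * b) - a - b, -1; a - b, 0, a * b + a + 1] :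
        Matrix (Fin 3) (Fin 3) (GaloisField p 2)) ^ 4
      = (16 : GaloisField p 2) • (1 : Matrix (Fin 3) (Fin 3) (GaloisField p 2)) := by
  have haC : (C a : (GaloisField p 2)[X]) ^ 2 + C a - 1 = 0 := by
    rw [← C_1, ← C_pow, ← C_add, ← C_sub, ha, C_0]
  have hbC : (C b : (GaloisField p 2)[X]) ^ 2 + C b + 1 = 0 := by
    rw [← C_1, ← C_pow, ← C_add, ← C_add, hb, C_0]
  constructor
  · rw [Matrix.charpoly, Matrix.det_fin_three]
    simp only [Matrix.charmatrix_apply, Matrix.of_apply, Matrix.cons_val', Matrix.cons_val_zero,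
      Matrix.empty_val', Matrix.cons_val_fin_one, Matrix.cons_val_one, Matrix.head_cons,
      Matrix.head_fin_const, Matrix.cons_val_two, Matrix.tail_cons, Matrix.head_fin_const,
      Matrix.map_apply, Matrix.diagonal_apply, Matrix.one_apply, if_pos, if_neg,
      Fin.reduceEq, reduceIte, Fin.isValue, ne_eq, map_ofNat, C_0, map_neg, map_sub, map_add, map_mul, map_one]
    linear_combination (-X + 5*C b - 2*C b*X + 5*(C b)^2 - (C b)^2*X + (C b)^3) * haC
      + (8 - 4*X) * hbC
  · ext i j
    fin_cases i <;> fin_cases j <;>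
      simp only [pow_succ, pow_zero, Matrix.one_mul, Matrix.mul_apply, Fin.sum_univ_three,
        Matrix.smul_apply, Matrix.one_apply, smul_eq_mul, Matrix.of_apply, Matrix.cons_val',
        Matrix.cons_val_zero, Matrix.cons_val_one, Matrix.cons_val_two, Matrix.head_cons,
        Matrix.tail_cons, Matrix.empty_val', Matrix.cons_val_fin_one, Matrix.head_fin_const,
        Fin.mk_zero, Fin.mk_one, finmk2, Fin.reduceEq, reduceIte, Fin.isValue, if_true, if_false, mul_one, mul_zero]
    · linear_combination (3 - 4*b - 4*b^2 + 3*b^3 + 2*b^4) * ha + (-12 + 12*b + 12*b^2) * hb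
    · linear_combination (1 + 4*b + 9*b^2 + 7*b^3 + b^4 - 2*a + 3*a*b + 8*a*b^2 + 5*a*b^3 + a*b^4 + a^2 + 3*a^2*b + 3*a^2*b^2 + a^2*b^3) * ha + (-4*a + 4*a*b + 4*a*b^2) * hb
    · linear_combination (1 - b - b^2 + a + a*b - 2*a*b^2 - 3*a*b^3 - a*b^4) * ha + (4 - 4*b - 4*b^2 + 4*a - 4*a*b - 4*a*b^2) * hb
    · linear_combination (-2*b + b^2 + 3*b^3 + b^4 - a - a*b + 2*a*b^2 + 3*a*b^3 + a*b^4) * ha + (-4*a + 4*a*b + 4*a*b^2) * hb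
    · linear_combination (4 + b + 11*b^2 + 18*b^3 + 7*b^4 - 2*a + 2*a*b + 12*a*b^2 + 11*a*b^3 + 3*a*b^4 + a^2 + 4*a^2*b + 6*a^2*b^2 + 4*a^2*b^3 + a^2*b^4) * ha + (-12 + 12*b + 12*b^2 - 4*a + 4*a*b + 4*a*b^2) * hb
    · linear_combination (-3 + 5*b^2 + 4*b^3 + b^4) * ha + (-4 + 4*b + 4*b^2) * hb
    · linear_combination (4 + 4*b + 4*b^2 + 3*b^3 + 4*a + 3*a*b - 2*a*b^2 - 3*a*b^3 - a*b^4 + a^2 + 3*a^2*b + 3*a^2*b^2 + a^2*b^3) * ha + (4 - 4*b - 4*b^2 + 4*a - 4*a*b - 4*a*b^2) * hb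
    · linear_combination (-4 - 3*b - b^2 + 3*b^3 + b^4 - a - 2*a*b - a*b^2 - a^2 - 2*a^2*b - a^2*b^2) * ha + (-4 + 4*b + 4*b^2) * hb
    · linear_combination (7 + 3*b + 5*b^2 + 11*b^3 + 5*b^4 + 4*a + 6*a*b - 3*a*b^3 - a*b^4 + a^2 + 4*a^2*b + 6*a^2*b^2 + 4*a^2*b^3 + a^2*b^4) * ha + (-8 + 8*b + 8*b^2 + 4*a - 4*a*b - 4*a*b^2) * hb
end

section
/- Let p > 3 be a prime and a, b ∈ F_{p²} with a² + a − 1 = 0 and b² + b + 1 = 0. Let Y be the 3×3 matrix with rows (ab+a+b+1, b+1, −ab−a), (−a, a+1, 1), (−b, ab, −ab−b). Then the characteristic polynomial of Y equals (λ − 2)(λ² − 2aλ + 4), and Y⁵ = 32·I. -/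
set_option maxHeartbeats 1000000 in
open Polynomial in
theorem stmt_15 (p : ℕ) [Fact p.Prime] (hp : 3 < p)
    (a b : GaloisField p 2) (ha : a ^ 2 + a - 1 = 0) (hb : b ^ 2 + b + 1 = 0) :
    (!![a * b + a + b + 1, b + 1, -(a * b) - a; -a, a + 1, 1; -b, a * b, -(a * b) - b] :
        Matrix (Fin 3) (Fin 3) (GaloisField p 2)).charpoly
      = (X - C 2) * (X ^ 2 - C (2 * a) * X + C 4) ∧
    (!![a * b + a + b + 1, b + 1, -(a * b) - a; -a, a + 1, 1; -b, a * b, -(a * b) - b] :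
        Matrix (Fin 3) (Fin 3) (GaloisField p 2)) ^ 5
      = (32 : GaloisField p 2) • (1 : Matrix (Fin 3) (Fin 3) (GaloisField p 2)) := by
  constructor
  · have ha' : (C a : (GaloisField p 2)[X]) ^ 2 + C a - 1 = 0 := by
      rw [← C_1, ← C_pow, ← C_add, ← C_sub, ha, C_0]
    have hb' : (C b : (GaloisField p 2)[X]) ^ 2 + C b + 1 = 0 := by
      rw [← C_1, ← C_pow, ← C_add, ← C_add, hb, C_0]
    rw [Matrix.charpoly, Matrix.det_fin_three]
    simp [Matrix.charmatrix_apply, Matrix.diagonal_apply, _root_.map_add, _root_.map_mul, map_sub,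
      map_neg, _root_.map_one, map_ofNat]
    linear_combination (C b * 6 + C b ^ 2 * 6 + (1 - C b - C b ^ 2) * X) * ha' +
      (8 + (-2 - 2 * C a) * X) * hb'
  · rw [pow_succ, pow_succ, pow_succ, pow_succ, pow_one, Matrix.mul_fin_three,
      Matrix.mul_fin_three, Matrix.mul_fin_three, Matrix.mul_fin_three, Matrix.one_fin_three]
    ext i j
    fin_cases i <;> fin_cases j <;>
      simp only [Matrix.cons_val', Matrix.cons_val_zero, Matrix.cons_val_one, Matrix.head_cons,
        Matrix.cons_val_two, Matrix.tail_cons, Matrix.empty_val', Matrix.cons_val_fin_one,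
        Fin.zero_eta, Fin.mk_one, Fin.reduceFinMk, Matrix.of_apply, Matrix.smul_apply, smul_eq_mul, mul_one, mul_zero, Matrix.head_fin_const]
    · linear_combination ((-13) + (-27)*b + (13)*b^2 + (65)*b^3 + (49)*b^4 + (11)*b^5 + (-8)*a + (-8)*a*b + (30)*a*b^2 + (66)*a*b^3 + (48)*a*b^4 + (12)*a*b^5 + (-6)*a^2 + (-2)*a^2*b + (28)*a^2*b^2 + (48)*a^2*b^3 + (30)*a^2*b^4 + (6)*a^2*b^5 + (1)*a^3 + (11)*a^3*b + (21)*a^3*b^2 + (17)*a^3*b^3 + (7)*a^3*b^4 + (1)*a^3*b^5) * ha + ((-44) + (16)*b + (40)*b^2 + (12)*b^3 + (8)*a*b + (16)*a*b^2 + (8)*a*b^3) * hb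
    · linear_combination ((11) + (45)*b + (77)*b^2 + (71)*b^3 + (35)*b^4 + (7)*b^5 + (5)*a + (19)*a*b + (35)*a*b^2 + (33)*a*b^3 + (17)*a*b^4 + (5)*a*b^5 + (5)*a^2 + (15)*a^2*b + (19)*a^2*b^2 + (9)*a^2*b^3 + (1)*a^2*b^4 + (1)*a^2*b^5 + (-4)*a^3*b + (-8)*a^3*b^2 + (-8)*a^3*b^3 + (-4)*a^3*b^4) * ha + ((16) + (40)*b + (32)*b^2 + (8)*b^3 + (4)*a + (8)*a*b + (8)*a*b^2 + (4)*a*b^3) * hb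
    · linear_combination ((8) + (14)*b + (8)*b^2 + (-6)*b^3 + (-12)*b^4 + (-4)*b^5 + (5)*a + (1)*a*b + (-15)*a*b^2 + (-25)*a*b^3 + (-21)*a*b^4 + (-7)*a*b^5 + (3)*a^2 + (-1)*a^2*b + (-13)*a^2*b^2 + (-19)*a^2*b^3 + (-15)*a^2*b^4 + (-5)*a^2*b^5 + (-1)*a^3 + (-7)*a^3*b + (-13)*a^3*b^2 + (-9)*a^3*b^3 + (-3)*a^3*b^4 + (-1)*a^3*b^5) * ha + ((12) + (8)*b + (-8)*b^2 + (-4)*b^3 + (4)*a + (-8)*a*b^2 + (-4)*a*b^3) * hb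
    · linear_combination ((-4) + (-20)*b + (-26)*b^2 + (-22)*b^3 + (-4)*b^4 + (-11)*a + (-38)*a*b + (-47)*a*b^2 + (-32)*a*b^3 + (-7)*a*b^4 + (-5)*a^2 + (-22)*a^2*b + (-29)*a^2*b^2 + (-20)*a^2*b^3 + (-5)*a^2*b^4 + (-5)*a^3 + (-14)*a^3*b + (-15)*a^3*b^2 + (-6)*a^3*b^3 + (-1)*a^3*b^4) * ha + ((-4) + (-20)*b + (-4)*b^2 + (-12)*a + (-20)*a*b + (-4)*a*b^2) * hb
    · linear_combination ((-13) + (-42)*b + (-45)*b^2 + (-6)*b^3 + (-3)*b^4 + (-8)*a + (-24)*a*b + (-30)*a*b^2 + (-12)*a*b^3 + (-6)*a*b^4 + (-6)*a^2 + (-12)*a^2*b + (-12)*a^2*b^2 + (1)*a^3 + (6)*a^3*b + (7)*a^3*b^2 + (2)*a^3*b^3 + (1)*a^3*b^4) * ha + ((-44) + (-4)*b + (-4)*b^2 + (-8)*a*b + (-8)*a*b^2) * hb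
    · linear_combination ((-1) + (-4)*b + (1)*b^2 + (7)*b^4 + (5)*a + (12)*a*b + (15)*a*b^2 + (8)*a*b^3 + (5)*a*b^4 + (5)*a^2 + (12)*a^2*b + (15)*a^2*b^2 + (4)*a^2*b^3 + (1)*a^2*b^4 + (4)*a^3 + (8)*a^3*b + (8)*a^3*b^2 + (4)*a^3*b^3) * ha + ((-8)*b + (8)*b^2 + (4)*a + (4)*a*b + (4)*a*b^2) * hb
    · linear_combination ((1)*b + (-8)*b^2 + (-15)*b^3 + (-14)*b^4 + (-7)*b^5 + (-5)*a*b + (-12)*a*b^2 + (-17)*a*b^3 + (-10)*a*b^4 + (-5)*a*b^5 + (-5)*a^2*b + (-12)*a^2*b^2 + (-13)*a^2*b^3 + (-2)*a^2*b^4 + (-1)*a^2*b^5 + (-4)*a^3*b + (-4)*a^3*b^2 + (-4)*a^3*b^3) * ha + ((-8)*b^2 + (-8)*b^3 + (-4)*a*b + (-4)*a*b^2 + (-4)*a*b^3) * hb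
    · linear_combination ((-8)*b + (-18)*b^2 + (-16)*b^3 + (-6)*b^4 + (4)*b^5 + (-5)*a*b + (-12)*a*b^2 + (-7)*a*b^3 + (-4)*a*b^4 + (7)*a*b^5 + (-3)*a^2*b + (-4)*a^2*b^2 + (-1)*a^2*b^3 + (5)*a^2*b^5 + (1)*a^3*b + (2)*a^3*b^2 + (3)*a^3*b^3 + (-2)*a^3*b^4 + (1)*a^3*b^5) * ha + ((-12)*b + (-12)*b^2 + (4)*b^3 + (-4)*a*b + (-12)*a*b^2 + (4)*a*b^3) * hb
    · linear_combination ((-1)*b + (2)*b^2 + (21)*b^3 + (-6)*b^4 + (-11)*b^5 + (2)*a*b + (6)*a*b^3 + (-12)*a*b^4 + (-12)*a*b^5 + (4)*a^2*b + (4)*a^2*b^2 + (12)*a^2*b^3 + (-6)*a^2*b^5 + (3)*a^3*b + (2)*a^3*b^2 + (1)*a^3*b^3 + (2)*a^3*b^4 + (-1)*a^3*b^5) * ha + ((-32) + (28)*b + (4)*b^2 + (-12)*b^3 + (-8)*a*b^2 + (-8)*a*b^3) * hb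
end

section
/- In the alternating group A₆, any two distinct subgroups both isomorphic to A₅ intersect in a subgroup of order 10 or 12. -/
open Subgroup

lemma natcard_perm (β : Type*) [Finite β] :
    Nat.card (Equiv.Perm β) = (Nat.card β).factorial := by
  classical
  have : Fintype β := Fintype.ofFinite β
  rw [Nat.card_eq_fintype_card, Nat.card_eq_fintype_card, Fintype.card_perm]

lemma cardA (n : ℕ) (hn : 2 ≤ n) : Nat.card (alternatingGroup (Fin n)) = n.factorial / 2 := by
  have : Nontrivial (Fin n) := Fin.nontrivial_iff_two_le.mpr hn
  have h1 : Nat.card (alternatingGroup (Fin n)) * (alternatingGroup (Fin n)).index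
      = Nat.card (Equiv.Perm (Fin n)) := Subgroup.card_mul_index _
  have h2 : (alternatingGroup (Fin n)).index = 2 := by
    rw [show alternatingGroup (Fin n) = (Equiv.Perm.sign (α := Fin n)).ker from rfl,
      Subgroup.index_ker,
      MonoidHom.range_eq_top_of_surjective _ (Equiv.Perm.sign_surjective (Fin n)),
      Subgroup.card_top, Nat.card_eq_fintype_card, Fintype.card_units_int]
  rw [natcard_perm, h2] at h1
  simp only [Nat.card_eq_fintype_card, Fintype.card_fin] at h1 ⊢
  omega

lemma cardA5' : Nat.card (alternatingGroup (Fin 5)) = 60 := by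
  rw [cardA 5 (by norm_num)]; rfl

lemma cardA6' : Nat.card (alternatingGroup (Fin 6)) = 360 := by
  rw [cardA 6 (by norm_num)]; rfl

lemma no_mid_subgroup (H : Subgroup (alternatingGroup (Fin 5)))
    (hd : Nat.card H = 15 ∨ Nat.card H = 20 ∨ Nat.card H = 30) : False := by
  have hcard : Nat.card H * H.index = 60 := by rw [Subgroup.card_mul_index, cardA5']
  have hne : H ≠ ⊤ := by
    intro h
    rw [h] at hd
    simp only [Subgroup.card_top, cardA5'] at hd
    omega
  have hcore : H.normalCore = ⊥ := by
    rcases IsSimpleGroup.eq_bot_or_eq_top_of_normal H.normalCore inferInstance with h | h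
    · exact h
    · exact absurd (top_le_iff.mp (h ▸ H.normalCore_le)) hne
  have hinj : Function.Injective
      (MulAction.toPermHom (alternatingGroup (Fin 5)) (alternatingGroup (Fin 5) ⧸ H)) := by
    rw [← MonoidHom.ker_eq_bot_iff, ← Subgroup.normalCore_eq_ker, hcore]
  have hdvd : Nat.card (alternatingGroup (Fin 5)) ∣
      Nat.card (Equiv.Perm (alternatingGroup (Fin 5) ⧸ H)) :=
    Subgroup.card_dvd_of_injective _ hinj
  rw [cardA5', natcard_perm, ← Subgroup.index_eq_card] at hdvd
  have hi : H.index = 4 ∨ H.index = 3 ∨ H.index = 2 := by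
    rcases hd with h | h | h <;> rw [h] at hcard <;> omega
  rcases hi with h | h | h <;> rw [h] at hdvd <;> revert hdvd <;> decide

theorem stmt_17 (K L : Subgroup (alternatingGroup (Fin 6)))
    (hK : Nonempty (K ≃* alternatingGroup (Fin 5)))
    (hL : Nonempty (L ≃* alternatingGroup (Fin 5)))
    (hne : K ≠ L) :
    Nat.card (K ⊓ L : Subgroup (alternatingGroup (Fin 6))) = 10 ∨
    Nat.card (K ⊓ L : Subgroup (alternatingGroup (Fin 6))) = 12 := by
  obtain ⟨eK⟩ := hK
  obtain ⟨eL⟩ := hL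
  have hcK : Nat.card K = 60 := (Nat.card_congr eK.toEquiv).trans cardA5'
  have hcL : Nat.card L = 60 := (Nat.card_congr eL.toEquiv).trans cardA5'
  set d := Nat.card (K ⊓ L : Subgroup (alternatingGroup (Fin 6))) with hd
  have hdvd : d ∣ 60 := hcK ▸ Subgroup.card_dvd_of_le inf_le_left
  have hiK : Nat.card K * K.index = 360 := by rw [Subgroup.card_mul_index, cardA6']
  have hiL : Nat.card L * L.index = 360 := by rw [Subgroup.card_mul_index, cardA6']
  rw [hcK] at hiK
  rw [hcL] at hiL
  have hKi : K.index = 6 := by omega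
  have hLi : L.index = 6 := by omega
  have hinf : (K ⊓ L).index ≤ 36 := by
    have h := Subgroup.index_inf_le (H := K) (K := L)
    rw [hKi, hLi] at h
    omega
  have hinfcard : d * (K ⊓ L).index = 360 := by rw [hd, Subgroup.card_mul_index, cardA6']
  have h10 : 10 ≤ d := by nlinarith [Nat.le_of_dvd (by norm_num : (0:ℕ) < 60) hdvd]
  have h60 : d ≠ 60 := by
    intro h
    have h1 : K ⊓ L = K :=
      Subgroup.eq_of_le_of_card_ge inf_le_left (by omega)
    have h2 : K ≤ L := h1 ▸ inf_le_right
    exact hne (Subgroup.eq_of_le_of_card_ge h2 (by omega))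
  have hmid : ¬(d = 15 ∨ d = 20 ∨ d = 30) := by
    intro h
    apply no_mid_subgroup (Subgroup.map eK.toMonoidHom ((K ⊓ L).subgroupOf K))
    have e1 : ((K ⊓ L).subgroupOf K) ≃* (K ⊓ L : Subgroup (alternatingGroup (Fin 6))) :=
      Subgroup.subgroupOfEquivOfLe inf_le_left
    have e2 := Subgroup.equivMapOfInjective ((K ⊓ L).subgroupOf K) eK.toMonoidHom
      eK.injective
    have hc : Nat.card (Subgroup.map eK.toMonoidHom ((K ⊓ L).subgroupOf K)) = d := by
      rw [← Nat.card_congr e2.toEquiv, Nat.card_congr e1.toEquiv]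
    omega
  have hle : d ≤ 60 := Nat.le_of_dvd (by norm_num) hdvd
  interval_cases d <;> omega
end
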